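/- For every natural number m with m ≥ 2, the sum over j from 1 to m−1 of 1/sin²(πj/m) equals (m² − 1)/3. -/

import Mathlib

open Real Finset

private lemma sum_pow_L1 (ω : ℂ) (n : ℕ) :
    (ω - 1) * ∑ k ∈ range n, (k : ℂ) * ω ^ k
      = ((n : ℂ) - 1) * ω ^ n - (∑ k ∈ range n, ω ^ k - 1) := by
  induction n with
  | zero => simp
  | succ n ih =>
    rw [Finset.sum_range_succ, Finset.sum_range_succ (f := fun k => ω ^ k)]
    push_cast
    linear_combination ih

private lemma sum_pow_L2 (ω : ℂ) (n : ℕ) :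
    (ω - 1) * ∑ k ∈ range n, (k : ℂ) ^ 2 * ω ^ k
      = ((n : ℂ) - 1) ^ 2 * ω ^ n - 2 * ∑ k ∈ range n, (k : ℂ) * ω ^ k
        + (∑ k ∈ range n, ω ^ k - 1) := by
  induction n with
  | zero => simp
  | succ n ih =>
    rw [Finset.sum_range_succ, Finset.sum_range_succ (f := fun k => (k : ℂ) * ω ^ k),
      Finset.sum_range_succ (f := fun k => ω ^ k)]
    push_cast
    linear_combination ih

private lemma gauss1 (n : ℕ) : ∑ k ∈ range n, (k : ℂ) = n * (n - 1) / 2 := by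
  induction n with
  | zero => simp
  | succ n ih =>
    rw [Finset.sum_range_succ]
    push_cast
    linear_combination ih

private lemma gauss2 (n : ℕ) : ∑ k ∈ range n, (k : ℂ) ^ 2 = n * (n - 1) * (2 * n - 1) / 6 := by
  induction n with
  | zero => simp
  | succ n ih =>
    rw [Finset.sum_range_succ]
    push_cast
    linear_combination ih

private lemma per_omega (m : ℕ) (ω : ℂ) (h1 : ω ^ m = 1) (h2 : ω ≠ 1) :
    ∑ k ∈ range m, (2 * (k : ℂ) ^ 2 - 2 * k * m) * ω ^ k
      = -4 * m * ω / (ω - 1) ^ 2 := by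
  have hω1 : ω - 1 ≠ 0 := sub_ne_zero.mpr h2
  have hgeom : ∑ k ∈ range m, ω ^ k = 0 := by
    rw [geom_sum_eq h2 m, h1, sub_self, zero_div]
  have hI1 := sum_pow_L1 ω m
  have hI2 := sum_pow_L2 ω m
  rw [h1, hgeom] at hI1 hI2
  rw [eq_div_iff (pow_ne_zero 2 hω1)]
  have hsplit : ∑ k ∈ range m, (2 * (k : ℂ) ^ 2 - 2 * k * m) * ω ^ k
      = 2 * (∑ k ∈ range m, (k : ℂ) ^ 2 * ω ^ k)
        - 2 * m * (∑ k ∈ range m, (k : ℂ) * ω ^ k) := by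
    rw [Finset.mul_sum, Finset.mul_sum, ← Finset.sum_sub_distrib]
    exact Finset.sum_congr rfl fun k _ => by ring
  rw [hsplit]
  linear_combination (2 * (ω - 1)) * hI2 + (-2 * (m : ℂ) * (ω - 1) - 4) * hI1

/-- Lemma 3.4 (first identity): for every integer `m ≥ 2`,
`∑_{j=1}^{m-1} 1 / sin²(πj/m) = (m² − 1)/3`. -/
theorem sum_csc_sq (m : ℕ) (hm : 2 ≤ m) :
    ∑ j ∈ Finset.Icc 1 (m - 1), 1 / (Real.sin (π * j / m)) ^ 2
      = ((m : ℝ) ^ 2 - 1) / 3 := by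
  have hm0 : (m : ℂ) ≠ 0 := Nat.cast_ne_zero.mpr (by omega)
  have hmR : (0 : ℝ) < m := by positivity
  set ζ : ℂ := Complex.exp (2 * ↑π * Complex.I / m) with hζ
  have hprim : IsPrimitiveRoot ζ m := Complex.isPrimitiveRoot_exp m (by omega)
  -- trig identity per j
  have trig : ∀ j : ℕ, 1 ≤ j → j < m →
      ((1 / (Real.sin (π * j / m)) ^ 2 : ℝ) : ℂ) = -4 * ζ ^ j / (ζ ^ j - 1) ^ 2 := by
    intro j h1 h2
    have hjR : (0 : ℝ) < j := by exact_mod_cast h1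
    set x : ℝ := π * j / m with hx
    have hsin : Real.sin x ≠ 0 := by
      apply ne_of_gt
      apply Real.sin_pos_of_pos_of_lt_pi
      · positivity
      · rw [hx, div_lt_iff₀ hmR]
        have : (j : ℝ) < m := by exact_mod_cast h2
        nlinarith [Real.pi_pos]
    have hων : ζ ^ j ≠ 1 := hprim.pow_ne_one_of_pos_of_lt (by omega) h2
    have hω1 : ζ ^ j - 1 ≠ 0 := sub_ne_zero.mpr hων
    set e : ℂ := Complex.exp ((x : ℂ) * Complex.I) with he
    have he0 : e ≠ 0 := Complex.exp_ne_zero _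
    have hω : ζ ^ j = e ^ 2 := by
      rw [hζ, he, ← Complex.exp_nat_mul, ← Complex.exp_nat_mul]
      congr 1
      rw [hx]
      push_cast
      ring
    have hs : (Real.sin x : ℂ) = (e⁻¹ - e) * Complex.I / 2 := by
      rw [Complex.ofReal_sin, Complex.sin, he, ← Complex.exp_neg]
      ring_nf
    have hkey : (ζ ^ j - 1) ^ 2 = -4 * ζ ^ j * ((Real.sin x : ℂ)) ^ 2 := by
      rw [hω, hs]
      have hinv : e * e⁻¹ = 1 := mul_inv_cancel₀ he0
      field_simp
      ring_nf
      rw [Complex.I_sq]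
      ring
    have hsC : ((Real.sin x : ℂ)) ≠ 0 := by exact_mod_cast hsin
    rw [Complex.ofReal_div, Complex.ofReal_one, Complex.ofReal_pow,
      div_eq_div_iff (pow_ne_zero 2 hsC) (pow_ne_zero 2 hω1)]
    linear_combination hkey
  -- rewrite each term as a double sum
  have key : ∀ j ∈ Finset.Icc 1 (m - 1),
      (m : ℂ) * ((1 / (Real.sin (π * j / m)) ^ 2 : ℝ) : ℂ)
        = ∑ k ∈ range m, (2 * (k : ℂ) ^ 2 - 2 * k * m) * (ζ ^ k) ^ j := by
    intro j hj
    rw [Finset.mem_Icc] at hj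
    have h1 : 1 ≤ j := hj.1
    have h2 : j < m := by omega
    have hων : ζ ^ j ≠ 1 := hprim.pow_ne_one_of_pos_of_lt (by omega) h2
    have h1' : (ζ ^ j) ^ m = 1 := by
      rw [← pow_mul, mul_comm, pow_mul, hprim.pow_eq_one, one_pow]
    have hpo := per_omega m (ζ ^ j) h1' hων
    calc (m : ℂ) * ((1 / (Real.sin (π * j / m)) ^ 2 : ℝ) : ℂ)
        = (m : ℂ) * (-4 * ζ ^ j / (ζ ^ j - 1) ^ 2) := by rw [trig j h1 h2]
      _ = -4 * m * ζ ^ j / (ζ ^ j - 1) ^ 2 := by ring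
      _ = ∑ k ∈ range m, (2 * (k : ℂ) ^ 2 - 2 * k * m) * (ζ ^ j) ^ k := hpo.symm
      _ = ∑ k ∈ range m, (2 * (k : ℂ) ^ 2 - 2 * k * m) * (ζ ^ k) ^ j :=
          Finset.sum_congr rfl fun k _ => by rw [← pow_mul, mul_comm j k, pow_mul]
  -- the complex-valued total
  have total : (m : ℂ) * ∑ j ∈ Finset.Icc 1 (m - 1), ((1 / (Real.sin (π * j / m)) ^ 2 : ℝ) : ℂ)
      = (m : ℂ) * (((m : ℂ) ^ 2 - 1) / 3) := by
    rw [Finset.mul_sum, Finset.sum_congr rfl key, Finset.sum_comm]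
    have inner : ∀ k ∈ range m,
        ∑ j ∈ Finset.Icc 1 (m - 1), (2 * (k : ℂ) ^ 2 - 2 * k * m) * (ζ ^ k) ^ j
          = 2 * (k : ℂ) * m - 2 * (k : ℂ) ^ 2 := by
      intro k hk
      rw [Finset.mem_range] at hk
      rw [← Finset.mul_sum]
      rcases Nat.eq_zero_or_pos k with rfl | hkpos
      · simp
      · have hων : ζ ^ k ≠ 1 := hprim.pow_ne_one_of_pos_of_lt hkpos.ne' hk
        have h1' : (ζ ^ k) ^ m = 1 := by
          rw [← pow_mul, mul_comm, pow_mul, hprim.pow_eq_one, one_pow]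
        have hg : ∑ j ∈ range m, (ζ ^ k) ^ j = 0 := by
          rw [geom_sum_eq hων m, h1', sub_self, zero_div]
        have hIcc : Finset.Icc 1 (m - 1) = Finset.Ico 1 m := by
          ext t; simp only [Finset.mem_Icc, Finset.mem_Ico]; omega
        have hSk : ∑ j ∈ Finset.Icc 1 (m - 1), (ζ ^ k) ^ j = -1 := by
          rw [hIcc, Finset.sum_Ico_eq_sub _ (by omega : 1 ≤ m), hg]
          simp
        rw [hSk]
        ring
    rw [Finset.sum_congr rfl inner]
    have : ∑ k ∈ range m, (2 * (k : ℂ) * m - 2 * (k : ℂ) ^ 2)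
        = 2 * m * (∑ k ∈ range m, (k : ℂ)) - 2 * ∑ k ∈ range m, (k : ℂ) ^ 2 := by
      rw [Finset.mul_sum, Finset.mul_sum, ← Finset.sum_sub_distrib]
      exact Finset.sum_congr rfl fun k _ => by ring
    rw [this, gauss1, gauss2]
    field_simp
    ring
  have hC : ((∑ j ∈ Finset.Icc 1 (m - 1), 1 / (Real.sin (π * j / m)) ^ 2 : ℝ) : ℂ)
      = (((m : ℝ) ^ 2 - 1) / 3 : ℝ) := by
    have := mul_left_cancel₀ hm0 total
    push_cast
    rw [← this]
    push_cast
    rfl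
  exact_mod_cast hC
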